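/- For n = 2: the ideal I_2 = ⟨p_2, q_2⟩ of ℤ[z,t], where p_2 = 1 − t z² and q_2 = z² − t, intersected with ℤ[t] equals the principal ideal generated by (1+t)(1−t) = 1 − t². (Conjecture 2 for n = 2, where the claimed generator for n ≡ 2 mod 4 is (1+t)∏_{i=1}^{n−1}(1−t^i) = (1+t)(1−t).) -/

import Mathlib

open Polynomial

/- We work in ℤ[t][z]: the outer variable `X` is z, and `C X` is t.
The intersection of I_2 = ⟨p_2, q_2⟩ with ℤ[t] is the principal ideal
generated by (1+t)(1-t) = 1 - t². -/
theorem stmt16 (f : Polynomial ℤ) :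
    (C f ∈ Ideal.span {1 - C X * X ^ 2, X ^ 2 - C X} : Prop) ↔
      (1 + X) * (1 - X) ∣ f := by
  constructor
  · intro h
    rw [Ideal.mem_span_pair] at h
    obtain ⟨u, v, huv⟩ := h
    have key := congrArg (eval₂RingHom (eval₂RingHom (Polynomial.C (R := ℤ)) (X^2)) X) huv
    simp only [map_add, map_mul, map_sub, map_one, map_pow,
      coe_eval₂RingHom, eval₂_C, eval₂_X] at key
    have hcomp : eval₂ Polynomial.C (X^2) f = f.comp (X^2) := rfl
    rw [hcomp] at key
    have hdvd4 : (X ^ 4 - 1 : Polynomial ℤ) ∣ f.comp (X ^ 2) :=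
      ⟨-(eval₂ (eval₂RingHom C (X^2)) X u), by linear_combination -key⟩
    have hmonic : Monic ((X : Polynomial ℤ) ^ 2 - 1) := by
      have := monic_X_pow_sub_C (1 : ℤ) (two_ne_zero)
      simpa using this
    have hdiv := modByMonic_add_div f ((X : Polynomial ℤ) ^ 2 - 1)
    set r := f %ₘ (X ^ 2 - 1) with hr
    set g := f /ₘ (X ^ 2 - 1) with hg
    have hdeg : r.degree < (X ^ 2 - 1 : Polynomial ℤ).degree := degree_modByMonic_lt f hmonic
    have hdeg2 : ((X : Polynomial ℤ) ^ 2 - 1).degree = 2 := by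
      simpa using degree_X_pow_sub_C (n := 2) (a := (1:ℤ)) two_pos
    have hrdvd : (X ^ 4 - 1 : Polynomial ℤ) ∣ r.comp (X ^ 2) := by
      have hf : f = (X ^ 2 - 1) * g + r := by linear_combination -hdiv
      have hfc : f.comp (X ^ 2) = (X ^ 4 - 1) * g.comp (X ^ 2) + r.comp (X ^ 2) := by
        rw [hf]
        simp only [add_comp, mul_comp, sub_comp, pow_comp, X_comp, one_comp]
        ring
      have := hdvd4
      rw [hfc] at this
      exact (dvd_add_right (Dvd.intro _ rfl)).mp this
    have hnatr : r.natDegree ≤ 1 := by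
      rw [natDegree_le_iff_degree_le]
      rw [hdeg2] at hdeg
      exact_mod_cast Order.le_of_lt_succ (by exact_mod_cast hdeg)
    have hcz : r.comp ((X : Polynomial ℤ) ^ 2) = 0 := by
      apply Polynomial.eq_zero_of_dvd_of_degree_lt hrdvd
      have h1 : (r.comp ((X : Polynomial ℤ) ^ 2)).degree ≤ 2 := by
        calc (r.comp ((X : Polynomial ℤ) ^ 2)).degree
            ≤ ((r.comp ((X : Polynomial ℤ) ^ 2)).natDegree : WithBot ℕ) := degree_le_natDegree
          _ ≤ ((r.natDegree * ((X : Polynomial ℤ)^2).natDegree : ℕ) : WithBot ℕ) := by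
              exact_mod_cast natDegree_comp_le
          _ ≤ 2 := by
              simp only [natDegree_X_pow]
              exact_mod_cast Nat.mul_le_mul_right 2 hnatr
      have h2 : ((X : Polynomial ℤ) ^ 4 - 1).degree = 4 := by
        simpa using degree_X_pow_sub_C (n := 4) (a := (1:ℤ)) (by norm_num)
      rw [h2]
      exact lt_of_le_of_lt h1 (by norm_num)
    have hrz : r = 0 := by
      rw [comp_eq_zero_iff] at hcz
      rcases hcz with h1 | ⟨_, h2⟩
      · exact h1
      · exfalso
        have : ((X : Polynomial ℤ) ^ 2).coeff 2 = (C (((X : Polynomial ℤ)^2).coeff 0)).coeff 2 := by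
          rw [← h2]
        simp at this
    have hfg : f = (X ^ 2 - 1) * g := by rw [← hdiv, hrz]; ring
    exact ⟨-g, by rw [hfg]; ring⟩
  · rintro ⟨g, rfl⟩
    rw [Ideal.mem_span_pair]
    exact ⟨C g, C g * C X, by simp only [map_mul, map_add, map_sub, map_one]; ring⟩
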